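/- Let F be a finite field, n, m ≥ 1, and let d_1, ..., d_m, p_1, ..., p_m be mutually independent random variables in F^n with each p_i uniform on F^n. Set q_i = d_i + p_i. Then for every subset B ⊆ {1,...,m}, the family (d_i)_{i∉B} is independent of the joint random variable ((q_1,...,q_m), (d_i)_{i∈B}, (p_i)_{i∈B}). -/

import Mathlib

open MeasureTheory ProbabilityTheory

section Aux

variable {Ω : Type*} [MeasurableSpace Ω] {μ : Measure Ω} [IsProbabilityMeasure μ]
  {ι : Type*} [Fintype ι] {X : Type*} [MeasurableSpace X] [MeasurableSingletonClass X]
  [Countable X]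

/-- If the joint law of a finite family is a product measure with probability marginals,
then the measure of a cylinder is the product of the marginal measures. -/
lemma aux_cylinder {f : ι → Ω → X} (hf : ∀ j, Measurable (f j))
    {ν : ι → Measure X} [∀ j, IsProbabilityMeasure (ν j)]
    (hmap : μ.map (fun ω j => f j ω) = Measure.pi ν)
    (S : Finset ι) (A : ι → Set X) (hA : ∀ j ∈ S, MeasurableSet (A j)) :
    μ (⋂ j ∈ S, f j ⁻¹' A j) = ∏ j ∈ S, ν j (A j) := by
  classical
  set A' : ι → Set X := fun j => if j ∈ S then A j else Set.univ with hA'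
  have hA'm : ∀ j, MeasurableSet (A' j) := by
    intro j
    by_cases h : j ∈ S <;> simp [hA', h, hA j]
  have hset : (⋂ j ∈ S, f j ⁻¹' A j) = (fun ω j => f j ω) ⁻¹' (Set.pi Set.univ A') := by
    ext ω
    simp only [Set.mem_iInter, Set.mem_preimage, Set.mem_pi, Set.mem_univ, true_implies, hA']
    constructor
    · intro h j
      by_cases hj : j ∈ S
      · simpa [hj] using h j hj
      · simp [hj]
    · intro h j hj
      have := h j
      simpa [hj] using this
  have hmeas : Measurable (fun ω j => f j ω) := measurable_pi_lambda _ hf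
  rw [hset, ← Measure.map_apply hmeas (MeasurableSet.univ_pi hA'm), hmap, Measure.pi_pi]
  have : ∀ j, ν j (A' j) = if j ∈ S then ν j (A j) else 1 := by
    intro j
    by_cases h : j ∈ S <;> simp [hA', h]
  rw [Finset.prod_congr rfl fun j _ => this j, Finset.prod_ite_mem, Finset.univ_inter]

/-- If the joint law of a finite family is a product measure with probability marginals,
the family is mutually independent. -/
lemma aux_iIndep {f : ι → Ω → X} (hf : ∀ j, Measurable (f j))
    {ν : ι → Measure X} [∀ j, IsProbabilityMeasure (ν j)]
    (hmap : μ.map (fun ω j => f j ω) = Measure.pi ν) :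
    iIndepFun f μ := by
  rw [iIndepFun_iff_measure_inter_preimage_eq_mul]
  intro S sets hsets
  rw [aux_cylinder hf hmap S sets hsets]
  refine Finset.prod_congr rfl fun j hj => ?_
  have h1 := aux_cylinder hf hmap {j} sets (by simpa using hsets j hj)
  simpa using h1.symm

/-- Mutual independence implies the joint law is the product of the marginal laws. -/
lemma aux_map_eq_pi {f : ι → Ω → X} (hf : ∀ j, Measurable (f j))
    (hind : iIndepFun f μ) :
    μ.map (fun ω j => f j ω) = Measure.pi (fun j => μ.map (f j)) := by
  haveI : ∀ j, IsProbabilityMeasure (μ.map (f j)) :=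
    fun j => Measure.isProbabilityMeasure_map (hf j).aemeasurable
  have hmeas : Measurable (fun ω j => f j ω) := measurable_pi_lambda _ hf
  refine Measure.ext_of_singleton fun h => ?_
  have h1 : (fun ω j => f j ω) ⁻¹' {h} = ⋂ j ∈ Finset.univ, f j ⁻¹' {h j} := by
    ext ω
    simp [funext_iff]
  have h2 : ({h} : Set (ι → X)) = Set.pi Set.univ (fun j => {h j}) := by
    ext g
    simp [funext_iff, Set.mem_pi]
  rw [Measure.map_apply hmeas (measurableSet_singleton h), h1,
    hind.measure_inter_preimage_eq_mul Finset.univ (fun j _ => measurableSet_singleton (h j)),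
    h2, Measure.pi_pi]
  exact Finset.prod_congr rfl fun j _ =>
    (Measure.map_apply (hf j) (measurableSet_singleton _)).symm

end Aux

theorem stmt_10 {Ω : Type*} [MeasurableSpace Ω] (μ : Measure Ω) [IsProbabilityMeasure μ]
    (F : Type*) [Field F] [Fintype F]
    (n m : ℕ) (hn : 1 ≤ n) (hm : 1 ≤ m)
    [MeasurableSpace (Fin n → F)] [MeasurableSingletonClass (Fin n → F)]
    (d p : Fin m → Ω → (Fin n → F))
    (hmd : ∀ i, Measurable (d i)) (hmp : ∀ i, Measurable (p i))
    (hindep : iIndepFun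
      (fun j => Sum.elim d p j) μ)
    (hunif : ∀ i, μ.map (p i) = (PMF.uniformOfFintype (Fin n → F)).toMeasure) :
    ∀ B : Finset (Fin m),
      IndepFun (fun ω => fun i : {i : Fin m // i ∉ B} => d i ω)
        (fun ω => ((fun i : Fin m => d i ω + p i ω),
                   (fun i : {i : Fin m // i ∈ B} => d i ω),
                   (fun i : {i : Fin m // i ∈ B} => p i ω))) μ := by
  intro B
  classical
  -- the transformed family: keep all `d i`, keep `p i` for `i ∈ B`,
  -- replace `p i` by `q i = d i + p i` for `i ∉ B`.
  set g : Fin m ⊕ Fin m → Ω → (Fin n → F) :=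
    Sum.elim d (fun i => if i ∈ B then p i else fun ω => d i ω + p i ω) with hgdef
  have hgm : ∀ j, Measurable (g j) := by
    rintro (i | i)
    · exact hmd i
    · by_cases h : i ∈ B
      · simpa [hgdef, h] using hmp i
      · simp only [hgdef, Sum.elim_inr, if_neg h]
        exact (measurable_of_countable
          (fun q : (Fin n → F) × (Fin n → F) => q.1 + q.2)).comp ((hmd i).prodMk (hmp i))
  have hfm : ∀ j : Fin m ⊕ Fin m, Measurable (Sum.elim d p j) := by
    rintro (i | i)
    · exact hmd i
    · exact hmp i
  -- marginal laws of the original family and of the transformed family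
  set ν : Fin m ⊕ Fin m → Measure (Fin n → F) := fun j => μ.map (Sum.elim d p j) with hνdef
  set ν' : Fin m ⊕ Fin m → Measure (Fin n → F) :=
    Sum.elim (fun i => μ.map (d i))
      (fun i => if i ∈ B then μ.map (p i)
        else (PMF.uniformOfFintype (Fin n → F)).toMeasure) with hν'def
  haveI hνP : ∀ j, IsProbabilityMeasure (ν j) :=
    fun j => Measure.isProbabilityMeasure_map (hfm j).aemeasurable
  haveI hν'P : ∀ j, IsProbabilityMeasure (ν' j) := by
    rintro (i | i)
    · exact Measure.isProbabilityMeasure_map (hmd i).aemeasurable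
    · by_cases h : i ∈ B
      · simpa [hν'def, h] using Measure.isProbabilityMeasure_map (hmp i).aemeasurable
      · simp only [hν'def, Sum.elim_inr, if_neg h]
        infer_instance
  -- the bijection on the codomain realizing the transformation
  set Ψ : ((Fin m ⊕ Fin m) → (Fin n → F)) → ((Fin m ⊕ Fin m) → (Fin n → F)) :=
    fun h => Sum.elim (fun i => h (Sum.inl i))
      (fun i => if i ∈ B then h (Sum.inr i) else h (Sum.inl i) + h (Sum.inr i)) with hΨdef
  have hΨm : Measurable Ψ := measurable_of_countable Ψ
  have htuple : (fun ω j => g j ω) = Ψ ∘ (fun ω j => Sum.elim d p j ω) := by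
    funext ω j
    cases j with
    | inl i => rfl
    | inr i =>
      by_cases h : i ∈ B <;> simp [hgdef, hΨdef, h]
  -- the inverse of Ψ
  set Φ : ((Fin m ⊕ Fin m) → (Fin n → F)) → ((Fin m ⊕ Fin m) → (Fin n → F)) :=
    fun h => Sum.elim (fun i => h (Sum.inl i))
      (fun i => if i ∈ B then h (Sum.inr i) else h (Sum.inr i) - h (Sum.inl i)) with hΦdef
  have hΨpre : ∀ h, Ψ ⁻¹' {h} = {Φ h} := by
    intro h
    ext x
    simp only [Set.mem_preimage, Set.mem_singleton_iff]
    constructor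
    · intro hx
      funext j
      cases j with
      | inl i =>
        have := congrFun hx (Sum.inl i)
        simpa [hΨdef, hΦdef] using this
      | inr i =>
        have h1 := congrFun hx (Sum.inr i)
        have h2 := congrFun hx (Sum.inl i)
        simp only [hΨdef, hΦdef, Sum.elim_inl, Sum.elim_inr] at h1 h2 ⊢
        by_cases hiB : i ∈ B
        · simpa [hiB] using h1
        · simp only [if_neg hiB] at h1 ⊢
          rw [← h1, ← h2]
          abel
    · rintro rfl
      funext j
      cases j with
      | inl i => simp [hΨdef, hΦdef]
      | inr i =>
        by_cases hiB : i ∈ B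
        · simp [hΨdef, hΦdef, hiB]
        · simp only [hΨdef, hΦdef, Sum.elim_inl, Sum.elim_inr, if_neg hiB]
          abel
  -- pushing the product measure through Ψ yields the product of the new marginals
  have hpush : Measure.map Ψ (Measure.pi ν) = Measure.pi ν' := by
    refine Measure.ext_of_singleton fun h => ?_
    rw [Measure.map_apply hΨm (measurableSet_singleton h), hΨpre h]
    have hsingΦ : ({Φ h} : Set ((Fin m ⊕ Fin m) → (Fin n → F)))
        = Set.pi Set.univ (fun j => {Φ h j}) := by
      ext x
      simp [funext_iff, Set.mem_pi]
    have hsingh : ({h} : Set ((Fin m ⊕ Fin m) → (Fin n → F)))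
        = Set.pi Set.univ (fun j => {h j}) := by
      ext x
      simp [funext_iff, Set.mem_pi]
    rw [hsingΦ, hsingh, Measure.pi_pi, Measure.pi_pi]
    refine Finset.prod_congr rfl fun j _ => ?_
    cases j with
    | inl i => simp [hνdef, hν'def, hΦdef]
    | inr i =>
      by_cases hiB : i ∈ B
      · simp [hνdef, hν'def, hΦdef, hiB]
      · simp only [hνdef, hν'def, hΦdef, Sum.elim_inr, if_neg hiB]
        rw [hunif i]
        rw [PMF.toMeasure_apply_singleton _ _ (measurableSet_singleton _),
          PMF.toMeasure_apply_singleton _ _ (measurableSet_singleton _)]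
        simp [PMF.uniformOfFintype_apply]
  -- the joint law of the transformed family is the product measure
  have hmap' : μ.map (fun ω j => g j ω) = Measure.pi ν' := by
    rw [htuple, ← Measure.map_map hΨm (measurable_pi_lambda _ hfm),
      aux_map_eq_pi hfm hindep, hpush]
  -- hence the transformed family is mutually independent
  have hgindep : iIndepFun g μ :=
    aux_iIndep hgm hmap'
  -- group the indices: S = {inl i : i ∉ B}, and its complement
  set S : Finset (Fin m ⊕ Fin m) := Bᶜ.image Sum.inl with hSdef
  have hSinl : ∀ i : {i : Fin m // i ∉ B}, (Sum.inl i.1 : Fin m ⊕ Fin m) ∈ S := by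
    intro i
    exact Finset.mem_image_of_mem _ (Finset.mem_compl.mpr i.2)
  have hTinl : ∀ i : Fin m, i ∈ B → (Sum.inl i : Fin m ⊕ Fin m) ∈ Sᶜ := by
    intro i hi
    simp [hSdef, hi]
  have hTinr : ∀ i : Fin m, (Sum.inr i : Fin m ⊕ Fin m) ∈ Sᶜ := by
    intro i
    simp [hSdef]
  have hbase := hgindep.indepFun_finset S Sᶜ disjoint_compl_right hgm
  -- compose with measurable maps to obtain the desired random variables
  set φ₁ : ({x // x ∈ S} → (Fin n → F)) → ({i : Fin m // i ∉ B} → (Fin n → F)) :=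
    fun h i => h ⟨Sum.inl i.1, hSinl i⟩ with hφ₁def
  set φ₂ : ({x // x ∈ Sᶜ} → (Fin n → F)) →
      ((Fin m → (Fin n → F)) × ({i : Fin m // i ∈ B} → (Fin n → F))
        × ({i : Fin m // i ∈ B} → (Fin n → F))) :=
    fun h =>
      (fun i => if hiB : i ∈ B then h ⟨Sum.inl i, hTinl i hiB⟩ + h ⟨Sum.inr i, hTinr i⟩
        else h ⟨Sum.inr i, hTinr i⟩,
       fun i => h ⟨Sum.inl i.1, hTinl i.1 i.2⟩,
       fun i => h ⟨Sum.inr i.1, hTinr i.1⟩) with hφ₂def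
  have hφ₁m : Measurable φ₁ := measurable_of_countable φ₁
  have hφ₂m : Measurable φ₂ := measurable_of_countable φ₂
  have hcomp := hbase.comp hφ₁m hφ₂m
  have he₁ : (fun ω => fun i : {i : Fin m // i ∉ B} => d i ω)
      = φ₁ ∘ (fun a (i : {x // x ∈ S}) => g i a) := by
    funext ω
    rfl
  have he₂ : (fun ω => ((fun i : Fin m => d i ω + p i ω),
                   (fun i : {i : Fin m // i ∈ B} => d i ω),
                   (fun i : {i : Fin m // i ∈ B} => p i ω)))
      = φ₂ ∘ (fun a (i : {x // x ∈ Sᶜ}) => g i a) := by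
    funext ω
    simp only [Function.comp_apply, hφ₂def, Prod.mk.injEq]
    refine ⟨?_, ?_, ?_⟩
    · funext i
      by_cases hiB : i ∈ B
      · simp [hgdef, hiB]
      · simp [hgdef, hiB]
    · funext i
      simp [hgdef]
    · funext i
      simp [hgdef, i.2]
  rw [he₁, he₂]
  exact hcomp
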